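/- Let G be a countable discrete group, X a locally compact Hausdorff space with a proper, cocompact G-action, c : X → [0,∞) a compactly supported continuous function with ∑_{h∈G} c(h⁻¹·x)² = 1 for every x ∈ X (a cut-off function), and π : C₀(X) → B(H) a nondegenerate covariant representation on the G-Hilbert space H. Then for every ξ ∈ H the family (π(h·c)² ξ)_{h∈G} is unconditionally summable in H with sum ξ; that is, ∑_{h∈G} π(h·c)² = 1 in the strong operator topology. -/
import Mathlib


open scoped ZeroAtInfty
open Filter MeasureTheory Topology

noncomputable section

variable {G : Type*} [Group G] [Countable G] [TopologicalSpace G] [DiscreteTopology G]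
variable {X : Type*} [TopologicalSpace X] [LocallyCompactSpace X] [T2Space X]
variable [MulAction G X] [ContinuousConstSMul G X]
variable {H : Type*} [NormedAddCommGroup H] [InnerProductSpace ℂ H] [CompleteSpace H]
  [SecondCountableTopology H]

/-- The translation action of `G` on `C₀(X, ℂ)`: `(g • φ)(x) = φ(g⁻¹ • x)`. -/
def C0smul (g : G) (φ : C₀(X, ℂ)) : C₀(X, ℂ) where
  toFun := fun x => φ (g⁻¹ • x)
  continuous_toFun := φ.continuous.comp (continuous_const_smul g⁻¹)
  zero_at_infty' := φ.zero_at_infty'.comp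
    ((Homeomorph.smul (g⁻¹ : G)).toCocompactMap.cocompact_tendsto')

/-- Conjugation `g(T) = u_g T u_g⁻¹` by the unitary representation `u`. -/
def conjU (u : G →* unitary (H →L[ℂ] H)) (g : G) (T : H →L[ℂ] H) : H →L[ℂ] H :=
  (u g : H →L[ℂ] H) * T * ((u g⁻¹ : unitary (H →L[ℂ] H)) : H →L[ℂ] H)

/-- The Hilbert space `ℓ²(G, H)`. -/
abbrev l2GH (G H : Type*) [NormedAddCommGroup H] [InnerProductSpace ℂ H] : Type _ :=
  lp (fun _ : G => H) 2

@[simp] lemma C0smul_apply (g : G) (φ : C₀(X, ℂ)) (x : X) : C0smul g φ x = φ (g⁻¹ • x) := rfl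

-- partial complex sums are bounded by 1 and within 1 of 1
lemma aux_partial (c : C₀(X, ℂ)) (hc_real : ∀ x : X, (c x).im = 0)
    (hc_nonneg : ∀ x : X, 0 ≤ (c x).re)
    (hc_sum : ∀ x : X, HasSum (fun h : G => c (h⁻¹ • x) ^ 2) 1)
    (F : Finset G) (x : X) :
    ‖(∑ h ∈ F, c (h⁻¹ • x) ^ 2)‖ ≤ 1 ∧ ‖(∑ h ∈ F, c (h⁻¹ • x) ^ 2) - 1‖ ≤ 1 := by
  have hre : ∀ y : X, c y = ((c y).re : ℂ) := fun y => by
    have := hc_real y; exact Complex.ext rfl (by simp [this])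
  have hsq : ∀ h : G, c (h⁻¹ • x) ^ 2 = (((c (h⁻¹ • x)).re ^ 2 : ℝ) : ℂ) := fun h => by
    rw [hre (h⁻¹ • x)]; norm_cast
  have hrsum : HasSum (fun h : G => (c (h⁻¹ • x)).re ^ 2) 1 := by
    have h1 := hc_sum x
    simp_rw [hsq] at h1
    exact Complex.hasSum_ofReal.mp (Complex.ofReal_one ▸ h1)
  set t : ℝ := ∑ h ∈ F, (c (h⁻¹ • x)).re ^ 2 with ht
  have ht0 : 0 ≤ t := Finset.sum_nonneg fun h _ => sq_nonneg _
  have ht1 : t ≤ 1 := sum_le_hasSum F (fun h _ => sq_nonneg _) hrsum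
  have hsum_eq : (∑ h ∈ F, c (h⁻¹ • x) ^ 2) = (t : ℂ) := by
    rw [ht, Complex.ofReal_sum]
    exact Finset.sum_congr rfl fun h _ => by rw [hsq h]
  constructor
  · rw [hsum_eq, Complex.norm_real, Real.norm_eq_abs, abs_of_nonneg ht0]; exact ht1
  · rw [hsum_eq]
    have : ((t : ℂ) - 1) = ((t - 1 : ℝ) : ℂ) := by push_cast; ring
    rw [this, Complex.norm_real, Real.norm_eq_abs, abs_of_nonpos (by linarith)]; linarith

-- finiteness from properness
lemma aux_finite (hproper : IsProperMap fun p : G × X => (p.1 • p.2, p.2))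
    (c : C₀(X, ℂ)) (hcs : HasCompactSupport (⇑c)) {K : Set X} (hK : IsCompact K) :
    {h : G | ∃ y ∈ tsupport (⇑c), h • y ∈ K}.Finite := by
  have hT : IsCompact ((fun p : G × X => (p.1 • p.2, p.2)) ⁻¹' (K ×ˢ tsupport (⇑c))) :=
    hproper.isCompact_preimage (hK.prod hcs)
  have himg : IsCompact (Prod.fst '' ((fun p : G × X => (p.1 • p.2, p.2)) ⁻¹' (K ×ˢ tsupport (⇑c)))) :=
    hT.image continuous_fst
  have hfin := himg.finite_of_discrete
  refine hfin.subset ?_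
  rintro h ⟨y, hy, hyK⟩
  exact ⟨(h, y), by simp [hyK, hy], rfl⟩


lemma C0_sum_apply {ι : Type*} (s : Finset ι) (f : ι → C₀(X, ℂ)) (x : X) :
    (∑ i ∈ s, f i) x = ∑ i ∈ s, f i x := by
  classical
  induction s using Finset.induction_on with
  | empty => simp
  | insert h ih => simp_all

set_option maxHeartbeats 1000000 in
lemma aux_C0_hasSum (hproper : IsProperMap fun p : G × X => (p.1 • p.2, p.2))
    (c : C₀(X, ℂ)) (hcs : HasCompactSupport (⇑c))
    (hc_real : ∀ x : X, (c x).im = 0) (hc_nonneg : ∀ x : X, 0 ≤ (c x).re)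
    (hc_sum : ∀ x : X, HasSum (fun h : G => c (h⁻¹ • x) ^ 2) 1)
    (φ : C₀(X, ℂ)) :
    HasSum (fun h : G => C0smul h c * C0smul h c * φ) φ := by
  classical
  rw [HasSum]
  apply (Metric.tendsto_atTop (β := Finset G)).mpr
  intro ε hε
  -- compact set outside which φ is small
  have hφ : {x : X | ‖φ x‖ < ε / 2} ∈ Filter.cocompact X := by
    have := φ.zero_at_infty'
    have h2 : Metric.ball (0 : ℂ) (ε / 2) ∈ 𝓝 (0 : ℂ) :=
      Metric.ball_mem_nhds 0 (by linarith)
    filter_upwards [this h2] with x hx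
    simpa [dist_eq_norm] using hx
  rw [mem_cocompact] at hφ
  obtain ⟨K, hK, hKsub⟩ := hφ
  obtain ⟨F₀, hF₀⟩ := (aux_finite hproper c hcs hK).exists_finset_coe
  refine ⟨F₀, fun F hF => ?_⟩
  rw [dist_eq_norm]
  have key : ∀ x : X, ‖((∑ h ∈ F, C0smul h c * C0smul h c * φ) - φ) x‖ ≤ ε / 2 := by
    intro x
    have heval : ((∑ h ∈ F, C0smul h c * C0smul h c * φ) - φ) x
        = (∑ h ∈ F, c (h⁻¹ • x) ^ 2) * φ x - φ x := by
      simp [C0_sum_apply, Finset.sum_mul, sq]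
    rw [heval]
    by_cases hx : x ∈ K
    · -- the partial sum is 1
      have hfull : ∀ h : G, h ∉ F → c (h⁻¹ • x) ^ 2 = 0 := by
        intro h hh
        by_contra hne
        have hc0 : c (h⁻¹ • x) ≠ 0 := fun h0 => hne (by rw [h0]; ring)
        have hy : (h⁻¹ • x) ∈ tsupport (⇑c) := subset_tsupport _ hc0
        have : h ∈ F₀ := by
          have : h ∈ ({h : G | ∃ y ∈ tsupport (⇑c), h • y ∈ K} : Set G) :=
            ⟨h⁻¹ • x, hy, by simpa using hx⟩
          rwa [← hF₀, Finset.mem_coe] at this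
        exact hh (hF this)
      have : (∑ h ∈ F, c (h⁻¹ • x) ^ 2) = 1 :=
        (hasSum_sum_of_ne_finset_zero hfull).unique (hc_sum x) |>.symm ▸ rfl
      rw [this, one_mul, sub_self, norm_zero]
      positivity
    · have h1 : ‖(∑ h ∈ F, c (h⁻¹ • x) ^ 2) - 1‖ ≤ 1 :=
        (aux_partial c hc_real hc_nonneg hc_sum F x).2
      have h2 : ‖φ x‖ ≤ ε / 2 := le_of_lt (hKsub hx)
      calc ‖(∑ h ∈ F, c (h⁻¹ • x) ^ 2) * φ x - φ x‖
          = ‖((∑ h ∈ F, c (h⁻¹ • x) ^ 2) - 1) * φ x‖ := by ring_nf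
        _ = ‖(∑ h ∈ F, c (h⁻¹ • x) ^ 2) - 1‖ * ‖φ x‖ := norm_mul _ _
        _ ≤ 1 * (ε / 2) := mul_le_mul h1 h2 (norm_nonneg _) zero_le_one
        _ = ε / 2 := one_mul _
  have : ‖(∑ h ∈ F, C0smul h c * C0smul h c * φ) - φ‖ ≤ ε / 2 := by
    rw [← ZeroAtInftyContinuousMap.norm_toBCF_eq_norm]
    exact BoundedContinuousFunction.norm_le (by linarith) |>.2 key
  linarith

theorem statement_11
    (u : G →* unitary (H →L[ℂ] H))
    (π : C₀(X, ℂ) →⋆ₙₐ[ℂ] (H →L[ℂ] H))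
    (hπnd : Dense (Submodule.span ℂ (Set.range fun p : C₀(X, ℂ) × H => π p.1 p.2) : Set H))
    (hcov : ∀ (g : G) (φ : C₀(X, ℂ)),
      (u g : H →L[ℂ] H) * π φ * ((u g⁻¹ : unitary (H →L[ℂ] H)) : H →L[ℂ] H) = π (C0smul g φ))
    (hproper : IsProperMap fun p : G × X => (p.1 • p.2, p.2))
    (hcocompact : CompactSpace (Quotient (MulAction.orbitRel G X)))
    (c : C₀(X, ℂ)) (hcs : HasCompactSupport (⇑c))
    (hc_real : ∀ x : X, (c x).im = 0) (hc_nonneg : ∀ x : X, 0 ≤ (c x).re)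
    (hc_sum : ∀ x : X, HasSum (fun h : G => c (h⁻¹ • x) ^ 2) 1) :
    ∀ ξ : H, HasSum (fun h : G => π (C0smul h c) (π (C0smul h c) ξ)) ξ := by
  classical
  have hπc : Continuous π :=
    AddMonoidHomClass.continuous_of_bound π 1
      (by simpa only [one_mul] using fun a => NonUnitalStarAlgHom.norm_apply_le π a)
  -- uniform bound on partial sums
  have hbound : ∀ (F : Finset G) (η : H),
      ‖∑ h ∈ F, π (C0smul h c) (π (C0smul h c) η)‖ ≤ ‖η‖ := by
    intro F η
    have h1 : (∑ h ∈ F, π (C0smul h c) (π (C0smul h c) η))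
        = π (∑ h ∈ F, C0smul h c * C0smul h c) η := by
      rw [map_sum, ContinuousLinearMap.sum_apply]
      exact Finset.sum_congr rfl fun h _ => by rw [map_mul]; rfl
    rw [h1]
    have hnorm : ‖(∑ h ∈ F, C0smul h c * C0smul h c : C₀(X, ℂ))‖ ≤ 1 := by
      rw [← ZeroAtInftyContinuousMap.norm_toBCF_eq_norm]
      refine BoundedContinuousFunction.norm_le zero_le_one |>.2 fun x => ?_
      have : ((∑ h ∈ F, C0smul h c * C0smul h c : C₀(X, ℂ))) x
          = ∑ h ∈ F, c (h⁻¹ • x) ^ 2 := by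
        rw [C0_sum_apply]
        exact Finset.sum_congr rfl fun h _ => by simp [sq]
      rw [show ((∑ h ∈ F, C0smul h c * C0smul h c : C₀(X, ℂ)).toBCF) x
          = ((∑ h ∈ F, C0smul h c * C0smul h c : C₀(X, ℂ))) x from rfl, this]
      exact (aux_partial c hc_real hc_nonneg hc_sum F x).1
    calc ‖π (∑ h ∈ F, C0smul h c * C0smul h c) η‖
        ≤ ‖π (∑ h ∈ F, C0smul h c * C0smul h c)‖ * ‖η‖ :=
          ContinuousLinearMap.le_opNorm _ _
      _ ≤ 1 * ‖η‖ := by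
          refine mul_le_mul_of_nonneg_right ?_ (norm_nonneg _)
          exact le_trans (NonUnitalStarAlgHom.norm_apply_le π _) hnorm
      _ = ‖η‖ := one_mul _
  -- HasSum on the dense span
  have hspan : ∀ η ∈ Submodule.span ℂ (Set.range fun p : C₀(X, ℂ) × H => π p.1 p.2),
      HasSum (fun h : G => π (C0smul h c) (π (C0smul h c) η)) η := by
    intro η hη
    induction hη using Submodule.span_induction with
    | mem y hy =>
      obtain ⟨⟨φ, v⟩, rfl⟩ := hy
      have hC0 := aux_C0_hasSum hproper c hcs hc_real hc_nonneg hc_sum φ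
      have h2 : HasSum (fun h : G => π (C0smul h c * C0smul h c * φ)) (π φ) :=
        hC0.map (π : C₀(X, ℂ) →⋆ₙₐ[ℂ] (H →L[ℂ] H)) hπc
      have h3 := h2.map (ContinuousLinearMap.apply ℂ H v)
        (ContinuousLinearMap.apply ℂ H v).continuous
      have heq : (⇑(ContinuousLinearMap.apply ℂ H v)
          ∘ fun h : G => π (C0smul h c * C0smul h c * φ))
          = fun h : G => π (C0smul h c) (π (C0smul h c) (π φ v)) := by
        funext h
        show π (C0smul h c * C0smul h c * φ) v = _
        rw [map_mul, map_mul]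
        rfl
      rw [heq] at h3
      exact h3
    | zero => simpa using hasSum_zero
    | add x y hx hy ihx ihy => simpa [map_add] using ihx.add ihy
    | smul a x hx ih => simpa [_root_.map_smul] using ih.const_smul a
  -- density argument
  intro ξ
  rw [HasSum]
  apply (Metric.tendsto_atTop (β := Finset G)).mpr
  intro ε hε
  obtain ⟨η, hηmem, hηd⟩ := Metric.mem_closure_iff.mp (hπnd ξ) (ε / 3) (by linarith)
  obtain ⟨F₀, hF₀⟩ := (Metric.tendsto_atTop (β := Finset G)).mp (hspan η hηmem) (ε / 3)
    (by linarith)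
  refine ⟨F₀, fun F hF => ?_⟩
  have hdiff : (∑ h ∈ F, π (C0smul h c) (π (C0smul h c) ξ))
      - (∑ h ∈ F, π (C0smul h c) (π (C0smul h c) η))
      = ∑ h ∈ F, π (C0smul h c) (π (C0smul h c) (ξ - η)) := by
    rw [← Finset.sum_sub_distrib]
    exact Finset.sum_congr rfl fun h _ => by rw [map_sub, map_sub]
  have h1 : ‖(∑ h ∈ F, π (C0smul h c) (π (C0smul h c) ξ))
      - (∑ h ∈ F, π (C0smul h c) (π (C0smul h c) η))‖ ≤ ‖ξ - η‖ := by
    rw [hdiff]; exact hbound F (ξ - η)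
  have h2 : dist (∑ h ∈ F, π (C0smul h c) (π (C0smul h c) η)) η < ε / 3 := hF₀ F hF
  have h3 : ‖ξ - η‖ < ε / 3 := by rw [← dist_eq_norm]; exact hηd
  calc dist (∑ h ∈ F, π (C0smul h c) (π (C0smul h c) ξ)) ξ
      ≤ dist (∑ h ∈ F, π (C0smul h c) (π (C0smul h c) ξ))
          (∑ h ∈ F, π (C0smul h c) (π (C0smul h c) η))
        + dist (∑ h ∈ F, π (C0smul h c) (π (C0smul h c) η)) η + dist η ξ :=
          dist_triangle4 _ _ _ _
    _ < ε / 3 + ε / 3 + ε / 3 := by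
        refine add_lt_add (add_lt_add_of_le_of_lt ?_ h2) ?_
        · rw [dist_eq_norm]; exact lt_of_le_of_lt h1 h3 |>.le
        · rw [dist_comm, dist_eq_norm]; exact h3
    _ = ε := by ring
  done


end
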